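/- Let q be a prime power, K a field containing F_q, and A an invertible n×n matrix over K. Consider the solution set S = { v ∈ K^n : v^{[q]} = A·v }, where v^{[q]} denotes the vector obtained by raising every coordinate of v to the q-th power. Then (a) S is an F_q-subspace of K^n, and (b) any family of elements of S that is linearly independent over F_q is linearly independent over K; in particular dim_{F_q} S ≤ n. -/

import Mathlib

open Finset Polynomial

/-- Every element of `K` fixed by `x ↦ x^q` lies in the image of `F = F_q`. -/
lemma fq_fixed_mem_range (q : ℕ) {F K : Type*} [Field F] [Fintype F]
    (hF : Fintype.card F = q) [Field K] [Algebra F K] {x : K} (hx : x ^ q = x) :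
    ∃ c : F, algebraMap F K c = x := by
  classical
  have hq2 : 1 < q := hF ▸ Fintype.one_lt_card
  set e := algebraMap F K with he
  set P : K[X] := X ^ q - X with hP
  have hdeg : P.natDegree = q := by
    rw [hP, Polynomial.natDegree_sub_eq_left_of_natDegree_lt, natDegree_X_pow]
    simpa [natDegree_X, natDegree_X_pow] using hq2
  have hP0 : P ≠ 0 := by
    intro h
    rw [h, natDegree_zero] at hdeg
    omega
  have hroot : ∀ y : K, y ^ q = y → y ∈ P.roots.toFinset := by
    intro y hy
    simp [Multiset.mem_toFinset, mem_roots, hP0, IsRoot, hP, hy, show (X ^ q - X : K[X]) ≠ 0 by rw [← hP]; exact hP0]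
  have hsub : (Finset.univ.image e) ⊆ P.roots.toFinset := by
    intro y hy
    obtain ⟨c, -, rfl⟩ := Finset.mem_image.1 hy
    apply hroot
    rw [← map_pow, ← hF, FiniteField.pow_card]
  have hcard : P.roots.toFinset.card ≤ (Finset.univ.image e).card := by
    rw [Finset.card_image_of_injective _ (RingHom.injective e), Finset.card_univ, hF]
    calc P.roots.toFinset.card ≤ Multiset.card P.roots := Multiset.toFinset_card_le _
      _ ≤ P.natDegree := P.card_roots'
      _ = q := hdeg
  have heq := Finset.eq_of_subset_of_card_le hsub hcard
  have hx' := hroot x hx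
  rw [← heq] at hx'
  obtain ⟨c, -, hc⟩ := Finset.mem_image.1 hx'
  exact ⟨c, hc⟩

/-- Let `F = F_q ⊆ K` be fields, `A ∈ GL_n(K)`, and
`S = { v ∈ Kⁿ : v^{[q]} = A·v }` (coordinatewise `q`-th power). Then (a) `S` is an
`F_q`-subspace of `Kⁿ`, and (b) any family of elements of `S` linearly independent
over `F_q` is linearly independent over `K`. -/
theorem frobenius_eigenspace_Fq_structure
    (q : ℕ) {F K : Type*} [Field F] [Fintype F] (hF : Fintype.card F = q)
    [Field K] [Algebra F K] {n : ℕ}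
    (A : Matrix (Fin n) (Fin n) K) (hA : IsUnit A)
    (S : Set (Fin n → K))
    (hS : S = { v : Fin n → K | (fun i => v i ^ q) = A.mulVec v }) :
    ((0 : Fin n → K) ∈ S ∧
      (∀ v ∈ S, ∀ w ∈ S, v + w ∈ S) ∧
      (∀ (c : F), ∀ v ∈ S, algebraMap F K c • v ∈ S)) ∧
    (∀ {ι : Type*} (b : ι → Fin n → K), (∀ i, b i ∈ S) →
      LinearIndependent F b → LinearIndependent K b) := by
  classical
  subst hS
  have hq2 : 1 < q := hF ▸ Fintype.one_lt_card
  have hq0 : q ≠ 0 := by omega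
  set p := ringChar F with hpdef
  haveI : CharP F p := ringChar.charP F
  obtain ⟨k, hp, hpk⟩ := FiniteField.card F p
  rw [hF] at hpk
  haveI : CharP K p := charP_of_injective_ringHom (algebraMap F K).injective p
  haveI := Fact.mk hp
  haveI : ExpChar K p := .prime hp
  have hAinj : Function.Injective A.mulVec := Matrix.mulVec_injective_iff_isUnit.2 hA
  have hmapfix : ∀ c : F, algebraMap F K c ^ q = algebraMap F K c := by
    intro c
    rw [← map_pow, ← hF, FiniteField.pow_card]
  constructor
  · refine ⟨?_, ?_, ?_⟩
    · show (fun i => (0 : Fin n → K) i ^ q) = A.mulVec 0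
      funext i
      simp [zero_pow hq0, Matrix.mulVec_zero]
    · intro v hv w hw
      show (fun i => (v + w) i ^ q) = A.mulVec (v + w)
      funext i
      have h1 := congrFun hv i
      have h2 := congrFun hw i
      simp only [Pi.add_apply, Matrix.mulVec_add]
      rw [hpk, add_pow_char_pow, ← hpk]
      rw [h1, h2]
    · intro c v hv
      show (fun i => (algebraMap F K c • v) i ^ q) = A.mulVec (algebraMap F K c • v)
      funext i
      have h1 := congrFun hv i
      rw [Matrix.mulVec_smul]
      simp only [Pi.smul_apply, smul_eq_mul, mul_pow, hmapfix c, h1]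
  · intro ι b hb hbF
    rw [linearIndependent_iff'] at hbF ⊢
    by_contra h
    push_neg at h
    obtain ⟨s₀, g₀, hsum₀, i₀', hi₀', hg₀⟩ := h
    -- P m : there is a nonzero relation with support of size m
    set P : ℕ → Prop := fun m => ∃ s : Finset ι, ∃ g : ι → K,
      (∑ i ∈ s, g i • b i = 0) ∧ (∀ i ∈ s, g i ≠ 0) ∧ s.Nonempty ∧ s.card = m with hPdef
    have hPex : ∃ m, P m := by
      refine ⟨(s₀.filter (fun i => g₀ i ≠ 0)).card, s₀.filter (fun i => g₀ i ≠ 0), g₀,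
        ?_, fun i hi => (Finset.mem_filter.1 hi).2, ⟨i₀', Finset.mem_filter.2 ⟨hi₀', hg₀⟩⟩, rfl⟩
      rw [Finset.sum_filter_of_ne]
      · exact hsum₀
      · intro i _ hne hzero
        exact hne (by rw [hzero, zero_smul])
    obtain ⟨s, g, hsum, hne, hsne, hcard⟩ := Nat.find_spec hPex
    have hmin : ∀ m' < Nat.find hPex, ¬ P m' := fun m' hm' => Nat.find_min hPex hm'
    obtain ⟨i₀, hi₀⟩ := hsne
    have hgi₀ : g i₀ ≠ 0 := hne i₀ hi₀
    set g1 : ι → K := fun i => g i / g i₀ with hg1def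
    have hsum1 : ∑ i ∈ s, g1 i • b i = 0 := by
      have : ∑ i ∈ s, g1 i • b i = (g i₀)⁻¹ • ∑ i ∈ s, g i • b i := by
        rw [Finset.smul_sum]
        refine Finset.sum_congr rfl fun i _ => ?_
        show (g i / g i₀) • b i = (g i₀)⁻¹ • g i • b i
        rw [div_eq_inv_mul, mul_smul]
      rw [this, hsum, smul_zero]
    have hg1i₀ : g1 i₀ = 1 := div_self hgi₀
    have hg1ne : ∀ i ∈ s, g1 i ≠ 0 := fun i hi => div_ne_zero (hne i hi) hgi₀
    -- coordinatewise relation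
    have hsumj : ∀ j, ∑ i ∈ s, g1 i * b i j = 0 := by
      intro j
      have := congrFun hsum1 j
      simpa [Finset.sum_apply, Pi.smul_apply, smul_eq_mul] using this
    -- the q-th power relation
    have hw : ∑ i ∈ s, (g1 i ^ q) • b i = 0 := by
      apply hAinj
      rw [Matrix.mulVec_zero]
      have hlin : A.mulVec (∑ i ∈ s, (g1 i ^ q) • b i)
          = ∑ i ∈ s, (g1 i ^ q) • A.mulVec (b i) := by
        simp only [← Matrix.mulVecLin_apply, map_sum, map_smul]
      rw [hlin]
      have hrw : ∀ i ∈ s, (g1 i ^ q) • A.mulVec (b i)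
          = (g1 i ^ q) • (fun j => b i j ^ q) := by
        intro i _
        rw [← hb i]
      rw [Finset.sum_congr rfl hrw]
      funext j
      have : ∑ i ∈ s, g1 i ^ q * b i j ^ q = (∑ i ∈ s, g1 i * b i j) ^ q := by
        rw [hpk, sum_pow_char_pow]
        refine Finset.sum_congr rfl fun i _ => ?_
        rw [mul_pow]
      simp only [Finset.sum_apply, Pi.smul_apply, smul_eq_mul, Pi.zero_apply]
      rw [this, hsumj j, zero_pow hq0]
    -- the difference relation has smaller support, hence vanishes
    set g2 : ι → K := fun i => g1 i ^ q - g1 i with hg2def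
    have hsum2 : ∑ i ∈ s, g2 i • b i = 0 := by
      simp only [hg2def, sub_smul, Finset.sum_sub_distrib, hw, hsum1, sub_zero]
    set s2 : Finset ι := s.filter (fun i => g2 i ≠ 0) with hs2def
    have hs2sub : s2 ⊆ s.erase i₀ := by
      intro i hi
      obtain ⟨his, hgi⟩ := Finset.mem_filter.1 hi
      refine Finset.mem_erase.2 ⟨?_, his⟩
      rintro rfl
      exact hgi (by simp [hg2def, hg1i₀])
    have hs2card : s2.card < Nat.find hPex := by
      calc s2.card ≤ (s.erase i₀).card := Finset.card_le_card hs2sub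
        _ < s.card := Finset.card_erase_lt_of_mem hi₀
        _ = Nat.find hPex := hcard
    have hfix : ∀ i ∈ s, g1 i ^ q = g1 i := by
      intro i hi
      by_contra hnefix
      apply hmin s2.card hs2card
      refine ⟨s2, g2, ?_, fun j hj => (Finset.mem_filter.1 hj).2,
        ⟨i, Finset.mem_filter.2 ⟨hi, sub_ne_zero.2 hnefix⟩⟩, rfl⟩
      rw [hs2def, Finset.sum_filter_of_ne]
      · exact hsum2
      · intro j _ hnej hzero
        exact hnej (by rw [hzero, zero_smul])
    -- descend to F
    have hc : ∀ i ∈ s, ∃ c : F, algebraMap F K c = g1 i :=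
      fun i hi => fq_fixed_mem_range q hF (hfix i hi)
    set cF : ι → F := fun i => if h : i ∈ s then Classical.choose (hc i h) else 0 with hcFdef
    have hcF : ∀ i ∈ s, algebraMap F K (cF i) = g1 i := by
      intro i hi
      rw [hcFdef]
      simp only [dif_pos hi]
      exact Classical.choose_spec (hc i hi)
    have hsumF : ∑ i ∈ s, cF i • b i = 0 := by
      have : ∀ i ∈ s, cF i • b i = g1 i • b i := by
        intro i hi
        rw [← hcF i hi, algebraMap_smul]
      rw [Finset.sum_congr rfl this, hsum1]
    have := hbF s cF hsumF i₀ hi₀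
    have h1 : (1 : K) = 0 := by
      rw [← hg1i₀, ← hcF i₀ hi₀, this, map_zero]
    exact one_ne_zero h1
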